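/- Define T_n(z) = 2 ∑_{i=1}^{⌊(n-1)/2⌋} S_{n-i-2}(z) S_{i-1}(z) z^{n-i-1} + (S_{⌊(n-2)/2⌋}(z))² and D_n(z) = ∏_{j≥1} S_{⌊(n-2)/2^j⌋}(z), with S_m(z) = ∏_{i=1}^m (1+z^i). Let P_n(z) = T_n(z)/D_n(z) (a polynomial by the divisibility theorem). Then for all n ≥ 3, P_n(1) = n·2^{ν(n-2)-1}, where ν(m) is the number of 1-bits in the binary representation of m. -/

import Mathlib

open Polynomial

noncomputable def S (n : ℕ) : Polynomial ℤ := ∏ i ∈ Finset.Icc 1 n, (1 + X ^ i)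

noncomputable def D (n : ℕ) : Polynomial ℤ := ∏ᶠ j : ℕ, S ((n - 2) / 2 ^ (j + 1))

noncomputable def T (n : ℕ) : Polynomial ℤ :=
  2 * ∑ i ∈ Finset.Icc 1 ((n - 1) / 2), S (n - i - 2) * S (i - 1) * X ^ (n - i - 1)
    + (S ((n - 2) / 2)) ^ 2

/-! ### Arithmetic lemmas on floor division -/

lemma twoe (e a : ℕ) (he : 0 < e) : a / e = 2 * (a / (2 * e)) + a % (2 * e) / e := by
  conv_lhs => rw [← Nat.div_add_mod a (2 * e)]
  rw [show 2 * e * (a / (2 * e)) = e * (2 * (a / (2 * e))) by ring, Nat.mul_add_div he]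

lemma ineq1 (e a b : ℕ) (he : 0 < e) :
    (a + b + 1) / (2 * e) + a / (2 * e) + b / (2 * e) ≤ a / e + b / e := by
  have h2e : 0 < 2 * e := by omega
  have ha := twoe e a he
  have hb := twoe e b he
  have hra : a % (2 * e) < 2 * e := Nat.mod_lt _ h2e
  have hrb : b % (2 * e) < 2 * e := Nat.mod_lt _ h2e
  have hs : (a + b + 1) / (2 * e) = a / (2 * e) + b / (2 * e) +
      (a % (2 * e) + b % (2 * e) + 1) / (2 * e) := by
    conv_lhs => rw [← Nat.div_add_mod a (2 * e), ← Nat.div_add_mod b (2 * e)]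
    rw [show 2 * e * (a / (2 * e)) + a % (2 * e) + (2 * e * (b / (2 * e)) + b % (2 * e)) + 1
        = 2 * e * (a / (2 * e) + b / (2 * e)) + (a % (2 * e) + b % (2 * e) + 1) by ring,
      Nat.mul_add_div h2e]
  have hu : (a % (2 * e) + b % (2 * e) + 1) / (2 * e) ≤ a % (2 * e) / e + b % (2 * e) / e := by
    rcases Nat.lt_or_ge (a % (2 * e) + b % (2 * e) + 1) (2 * e) with h | h
    · rw [Nat.div_eq_of_lt h]; exact Nat.zero_le _
    · have h1 : (a % (2 * e) + b % (2 * e) + 1) / (2 * e) < 2 :=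
        (Nat.div_lt_iff_lt_mul h2e).mpr (by omega)
      have h2 : 1 ≤ a % (2 * e) / e + b % (2 * e) / e := by
        have h3 : e ≤ a % (2 * e) ∨ e ≤ b % (2 * e) := by omega
        rcases h3 with h3 | h3
        · exact le_trans ((Nat.one_le_div_iff he).mpr h3) (Nat.le_add_right _ _)
        · exact le_trans ((Nat.one_le_div_iff he).mpr h3) (Nat.le_add_left _ _)
      exact le_trans (Nat.lt_succ_iff.mp h1) h2
  rw [ha, hb, hs]
  generalize a / (2 * e) = qa at *
  generalize b / (2 * e) = qb at *
  generalize a % (2 * e) / e = sa at *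
  generalize b % (2 * e) / e = sb at *
  generalize (a % (2 * e) + b % (2 * e) + 1) / (2 * e) = u at *
  omega

lemma ineq2 (e m : ℕ) (he : 0 < e) :
    m / (2 * e) + m / 2 / (2 * e) + m / 2 / (2 * e) ≤ m / 2 / e + m / 2 / e := by
  have h1 : m / (2 * e) = m / 2 / e := (Nat.div_div_eq_div_mul m 2 e).symm
  have h2 : m / 2 / (2 * e) = m / 2 / e / 2 := by
    rw [Nat.div_div_eq_div_mul, Nat.div_div_eq_div_mul, Nat.div_div_eq_div_mul]
    ring_nf
  have h3 : m / 2 / e / 2 * 2 ≤ m / 2 / e := Nat.div_mul_le_self _ _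
  rw [h1, h2]
  generalize m / 2 / e = x at *
  generalize x / 2 = y at *
  omega

/-! ### Counting divisors in multisets -/

lemma icc_eq_ioc (t : ℕ) : Finset.Icc 1 t = Finset.Ioc 0 t := by
  ext x; simp [Nat.lt_iff_add_one_le]

lemma cnt_aux (d t : ℕ) (p : ℕ → ℕ) (hp : ∀ k, Multiset.count d (Nat.divisors (p k)).val
    = if d ∣ p k ∧ p k ≠ 0 then 1 else 0) :
    Multiset.count d (((Finset.Icc 1 t).val.map p).bind fun k => (Nat.divisors k).val)
      = ((Finset.Icc 1 t).filter fun k => d ∣ p k ∧ p k ≠ 0).card := by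
  rw [Multiset.count_bind, Multiset.map_map]
  rw [show ((Finset.Icc 1 t).val.map ((fun b => Multiset.count d (Nat.divisors b).val) ∘ p)).sum
      = ∑ k ∈ Finset.Icc 1 t, Multiset.count d (Nat.divisors (p k)).val from rfl]
  rw [Finset.card_filter]
  exact Finset.sum_congr rfl fun k _ => hp k

lemma count_div (d k : ℕ) : Multiset.count d (Nat.divisors k).val
    = if d ∣ k ∧ k ≠ 0 then 1 else 0 := by
  rw [Multiset.count_eq_of_nodup (Nat.divisors k).nodup]
  simp [Nat.mem_divisors]

lemma cnt1 (d t : ℕ) :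
    Multiset.count d ((Finset.Icc 1 t).val.bind fun k => (Nat.divisors k).val) = t / d := by
  have h := cnt_aux d t id (fun k => count_div d k)
  rw [Multiset.map_id] at h
  rw [h, icc_eq_ioc, ← Nat.Ioc_filter_dvd_card_eq_div t d]
  congr 1
  apply Finset.filter_congr
  intro k hk
  simp only [Finset.mem_Ioc] at hk
  simp [hk.1.ne']

lemma cnt2 (d t : ℕ) :
    Multiset.count d (((Finset.Icc 1 t).val.map fun i => 2 * i).bind fun k => (Nat.divisors k).val)
      = t / (if 2 ∣ d then d / 2 else d) := by
  rw [cnt_aux d t _ (fun k => count_div d (2 * k))]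
  rw [icc_eq_ioc, ← Nat.Ioc_filter_dvd_card_eq_div t (if 2 ∣ d then d / 2 else d)]
  congr 1
  apply Finset.filter_congr
  intro k hk
  simp only [Finset.mem_Ioc] at hk
  by_cases h2 : 2 ∣ d
  · obtain ⟨e, rfl⟩ := h2
    simp only [if_pos (Dvd.intro e rfl)]
    have h3 : 2 * e ∣ 2 * k ↔ e ∣ k := mul_dvd_mul_iff_left (two_ne_zero)
    simp [h3, hk.1.ne', Nat.mul_div_cancel_left e (by norm_num : 0 < 2)]
  · have hc : Nat.Coprime d 2 := Nat.coprime_two_right.mpr (Nat.odd_iff.mpr (by omega))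
    have h3 : d ∣ 2 * k ↔ d ∣ k := by
      constructor
      · intro h; exact hc.dvd_of_dvd_mul_left h
      · exact fun h => h.mul_left 2
    simp [h2, h3, hk.1.ne']

/-! ### Products of `X ^ k - 1` and cyclotomic polynomials -/

noncomputable def Cm (t : ℕ) : Polynomial ℤ := ∏ i ∈ Finset.Icc 1 t, (X ^ i - 1)
noncomputable def C2 (t : ℕ) : Polynomial ℤ := ∏ i ∈ Finset.Icc 1 t, (X ^ (2 * i) - 1)

lemma S_mul_C (t : ℕ) : S t * Cm t = C2 t := by
  rw [S, Cm, C2, ← Finset.prod_mul_distrib]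
  refine Finset.prod_congr rfl fun i _ => ?_
  rw [two_mul, pow_add]; ring

lemma Cm_monic (t : ℕ) : (Cm t).Monic := by
  apply monic_prod_of_monic
  intro i hi
  simpa using monic_X_pow_sub_C (1 : ℤ) (by simp at hi; omega : i ≠ 0)

lemma G_eq (M : Multiset ℕ) (hM : ∀ k ∈ M, k ≠ 0) :
    (M.map fun k => (X : Polynomial ℤ) ^ k - 1).prod
      = ((M.bind fun k => (Nat.divisors k).val).map fun d => cyclotomic d ℤ).prod := by
  induction M using Multiset.induction with
  | empty => simp
  | cons k s ih =>
    rw [Multiset.map_cons, Multiset.prod_cons, Multiset.cons_bind, Multiset.map_add,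
      Multiset.prod_add, ih (fun x hx => hM x (Multiset.mem_cons_of_mem hx)),
      ← prod_cyclotomic_eq_X_pow_sub_one
        (Nat.pos_of_ne_zero (hM k (Multiset.mem_cons_self k s))) ℤ]
    rfl

lemma prod_map_dvd {A B : Multiset ℕ} (h : A ≤ B) (f : ℕ → Polynomial ℤ) :
    (A.map f).prod ∣ (B.map f).prod := by
  obtain ⟨E, rfl⟩ := Multiset.le_iff_exists_add.mp h
  rw [Multiset.map_add, Multiset.prod_add]
  exact dvd_mul_right _ _

lemma count_ineq (J m a b d : ℕ) (hab : a + b + 1 = m ∨ (a = m / 2 ∧ b = m / 2)) :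
    (∑ j ∈ Finset.range J, m / 2 ^ (j + 1) / (if 2 ∣ d then d / 2 else d)) + a / d + b / d
    ≤ a / (if 2 ∣ d then d / 2 else d) + b / (if 2 ∣ d then d / 2 else d)
      + ∑ j ∈ Finset.range J, m / 2 ^ (j + 1) / d := by
  by_cases h2 : 2 ∣ d
  · obtain ⟨e, rfl⟩ := h2
    rcases Nat.eq_zero_or_pos e with rfl | he
    · simp
    have hd2 : 2 * e / 2 = e := Nat.mul_div_cancel_left e (by norm_num)
    rw [if_pos ⟨e, rfl⟩, hd2]
    have step1 : ∀ j : ℕ, m / 2 ^ (j + 1) / (2 * e) = m / 2 ^ (j + 1 + 1) / e := by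
      intro j
      rw [Nat.div_div_eq_div_mul, Nat.div_div_eq_div_mul, pow_succ 2 (j + 1)]
      ring_nf
    have tele : (∑ j ∈ Finset.range J, m / 2 ^ (j + 1) / e)
        ≤ m / (2 * e) + ∑ j ∈ Finset.range J, m / 2 ^ (j + 1 + 1) / e := by
      have h1 : (∑ j ∈ Finset.range J, m / 2 ^ (j + 1) / e)
          ≤ ∑ j ∈ Finset.range (J + 1), m / 2 ^ (j + 1) / e :=
        Finset.sum_le_sum_of_subset (Finset.range_subset_range.mpr (Nat.le_succ J))
      rw [Finset.sum_range_succ' (fun j => m / 2 ^ (j + 1) / e) J] at h1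
      have h0 : m / 2 ^ (0 + 1) / e = m / (2 * e) := by
        rw [pow_one, Nat.div_div_eq_div_mul]
      omega
    have main : m / (2 * e) + a / (2 * e) + b / (2 * e) ≤ a / e + b / e := by
      rcases hab with rfl | ⟨rfl, rfl⟩
      · exact ineq1 e a b he
      · exact ineq2 e m he
    simp only [step1]
    omega
  · rw [if_neg h2]
    omega

/-! ### The key divisibility lemma -/

lemma key (J m a b : ℕ) (hab : a + b + 1 = m ∨ (a = m / 2 ∧ b = m / 2)) :
    (∏ j ∈ Finset.range J, S (m / 2 ^ (j + 1))) ∣ S a * S b := by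
  set c : Polynomial ℤ := Cm a * Cm b * ∏ j ∈ Finset.range J, Cm (m / 2 ^ (j + 1)) with hc
  have hcm : c.Monic := ((Cm_monic a).mul (Cm_monic b)).mul
    (monic_prod_of_monic _ _ fun j _ => Cm_monic _)
  rw [← mul_dvd_mul_iff_right hcm.ne_zero]
  set ML : Multiset ℕ :=
    ((Multiset.range J).bind fun j =>
        (Finset.Icc 1 (m / 2 ^ (j + 1))).val.map fun i => 2 * i)
      + (Finset.Icc 1 a).val + (Finset.Icc 1 b).val with hML
  set MR : Multiset ℕ :=
    ((Finset.Icc 1 a).val.map fun i => 2 * i) + ((Finset.Icc 1 b).val.map fun i => 2 * i)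
      + ((Multiset.range J).bind fun j => (Finset.Icc 1 (m / 2 ^ (j + 1))).val) with hMR
  have hMLval : (ML.map fun k => (X : Polynomial ℤ) ^ k - 1).prod
      = (∏ j ∈ Finset.range J, C2 (m / 2 ^ (j + 1))) * (Cm a * Cm b) := by
    rw [hML]
    simp only [Multiset.map_add, Multiset.prod_add, Multiset.map_bind, Multiset.prod_bind,
      Multiset.map_map, Function.comp_def]
    rw [mul_assoc]
    rfl
  have hMRval : (MR.map fun k => (X : Polynomial ℤ) ^ k - 1).prod
      = C2 a * C2 b * ∏ j ∈ Finset.range J, Cm (m / 2 ^ (j + 1)) := by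
    rw [hMR]
    simp only [Multiset.map_add, Multiset.prod_add, Multiset.map_bind, Multiset.prod_bind,
      Multiset.map_map]
    rfl
  have hLeq : (∏ j ∈ Finset.range J, S (m / 2 ^ (j + 1))) * c
      = (ML.map fun k => (X : Polynomial ℤ) ^ k - 1).prod := by
    rw [hMLval, hc]
    have h1 : (∏ j ∈ Finset.range J, S (m / 2 ^ (j + 1)))
        * (∏ j ∈ Finset.range J, Cm (m / 2 ^ (j + 1)))
        = ∏ j ∈ Finset.range J, C2 (m / 2 ^ (j + 1)) := by
      rw [← Finset.prod_mul_distrib]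
      exact Finset.prod_congr rfl fun j _ => S_mul_C _
    rw [← h1]; ring
  have hReq : S a * S b * c = (MR.map fun k => (X : Polynomial ℤ) ^ k - 1).prod := by
    rw [hMRval, hc, ← S_mul_C a, ← S_mul_C b]; ring
  rw [hLeq, hReq]
  have hMLne : ∀ k ∈ ML, k ≠ 0 := by
    intro k hk
    rw [hML] at hk
    simp only [Multiset.mem_add, Multiset.mem_bind, Multiset.mem_map, Multiset.mem_range,
      Finset.mem_val, Finset.mem_Icc] at hk
    rcases hk with (⟨j, _, i, hi, rfl⟩ | h) | h <;> omega
  have hMRne : ∀ k ∈ MR, k ≠ 0 := by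
    intro k hk
    rw [hMR] at hk
    simp only [Multiset.mem_add, Multiset.mem_bind, Multiset.mem_map, Multiset.mem_range,
      Finset.mem_val, Finset.mem_Icc] at hk
    rcases hk with (⟨i, hi, rfl⟩ | ⟨i, hi, rfl⟩) | ⟨j, _, h⟩ <;> omega
  rw [G_eq ML hMLne, G_eq MR hMRne]
  apply prod_map_dvd
  rw [Multiset.le_iff_count]
  intro d
  rw [hML, hMR]
  simp only [Multiset.add_bind, Multiset.count_add, Multiset.bind_assoc]
  rw [cnt1, cnt1, cnt2, cnt2]
  have e1 : Multiset.count d (((Multiset.range J).bind fun j =>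
      ((Finset.Icc 1 (m / 2 ^ (j + 1))).val.map fun i => 2 * i).bind
        fun k => (Nat.divisors k).val))
      = ∑ j ∈ Finset.range J, m / 2 ^ (j + 1) / (if 2 ∣ d then d / 2 else d) := by
    rw [Multiset.count_bind]
    rw [show ((Multiset.range J).map fun j => Multiset.count d
        (((Finset.Icc 1 (m / 2 ^ (j + 1))).val.map fun i => 2 * i).bind
          fun k => (Nat.divisors k).val)).sum
        = ∑ j ∈ Finset.range J, Multiset.count d
          (((Finset.Icc 1 (m / 2 ^ (j + 1))).val.map fun i => 2 * i).bind
            fun k => (Nat.divisors k).val) from rfl]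
    exact Finset.sum_congr rfl fun j _ => cnt2 d _
  have e2 : Multiset.count d (((Multiset.range J).bind fun j =>
      (Finset.Icc 1 (m / 2 ^ (j + 1))).val.bind fun k => (Nat.divisors k).val))
      = ∑ j ∈ Finset.range J, m / 2 ^ (j + 1) / d := by
    rw [Multiset.count_bind]
    rw [show ((Multiset.range J).map fun j => Multiset.count d
        ((Finset.Icc 1 (m / 2 ^ (j + 1))).val.bind fun k => (Nat.divisors k).val)).sum
        = ∑ j ∈ Finset.range J, Multiset.count d
          ((Finset.Icc 1 (m / 2 ^ (j + 1))).val.bind fun k => (Nat.divisors k).val) from rfl]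
    exact Finset.sum_congr rfl fun j _ => cnt1 d _
  rw [e1, e2]
  have := count_ineq J m a b d hab
  omega

/-! ### Evaluations at 1 -/

lemma S_zero : S 0 = 1 := by simp [S]

lemma S_eval (t : ℕ) : (S t).eval 1 = 2 ^ t := by
  rw [S, eval_prod]
  rw [Finset.prod_congr rfl (fun i _ => by simp : ∀ i ∈ Finset.Icc 1 t,
    ((1 + X ^ i : Polynomial ℤ).eval 1) = 2)]
  rw [Finset.prod_const, Nat.card_Icc]
  norm_num

lemma nu_pos (m : ℕ) (hm : 1 ≤ m) : 1 ≤ (Nat.digits 2 m).sum := by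
  induction m using Nat.strong_induction_on with
  | _ m ih =>
    rw [Nat.digits_def' (by norm_num : 1 < 2) hm]
    simp only [List.sum_cons]
    rcases Nat.eq_zero_or_pos (m % 2) with h | h
    · have h2 : 1 ≤ m / 2 := by omega
      have := ih (m / 2) (by omega) h2
      omega
    · omega

lemma nu_sum (m : ℕ) : ∀ J, m < 2 ^ J →
    (Nat.digits 2 m).sum + ∑ j ∈ Finset.range J, m / 2 ^ (j + 1) = m := by
  induction m using Nat.strong_induction_on with
  | _ m ih =>
    intro J hJ
    rcases Nat.eq_zero_or_pos m with rfl | hm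
    · simp
    obtain ⟨K, rfl⟩ : ∃ K, J = K + 1 := by
      rcases J with _ | K
      · simp at hJ; omega
      · exact ⟨K, rfl⟩
    rw [Nat.digits_def' (by norm_num : 1 < 2) hm]
    simp only [List.sum_cons]
    have hstep : ∀ j : ℕ, m / 2 ^ (j + 1) = m / 2 / 2 ^ j := by
      intro j
      rw [Nat.div_div_eq_div_mul, pow_succ']
    simp only [hstep]
    rw [Finset.sum_range_succ' (fun j => m / 2 / 2 ^ j) K]
    have h2 : m / 2 < 2 ^ K := by
      have : m < 2 ^ K * 2 := by rw [← pow_succ]; exact hJ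
      omega
    have ihh := ih (m / 2) (by omega) K h2
    simp only [pow_zero, Nat.div_one]
    omega

lemma D_eq (n : ℕ) : D n = ∏ j ∈ Finset.range (n - 2), S ((n - 2) / 2 ^ (j + 1)) := by
  apply finprod_eq_prod_of_mulSupport_subset
  intro j hj
  simp only [Function.mem_mulSupport] at hj
  by_contra hc
  simp only [Finset.coe_range, Set.mem_Iio, not_lt] at hc
  have h0 : (n - 2) / 2 ^ (j + 1) = 0 := by
    apply Nat.div_eq_of_lt
    have h2 : j < 2 ^ j := Nat.lt_two_pow_self (n := j)
    have h3 : 2 ^ (j + 1) = 2 ^ j * 2 := pow_succ 2 j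
    omega
  rw [h0, S_zero] at hj
  exact hj rfl

lemma D_eval (n : ℕ) (hn : 3 ≤ n) :
    (D n).eval 1 = 2 ^ ((n - 2) - (Nat.digits 2 (n - 2)).sum) := by
  rw [D_eq, eval_prod]
  rw [Finset.prod_congr rfl (fun j _ => S_eval ((n - 2) / 2 ^ (j + 1)))]
  rw [Finset.prod_pow_eq_pow_sum]
  congr 1
  have h := nu_sum (n - 2) (n - 2) (Nat.lt_two_pow_self (n := n - 2))
  omega

lemma T_eval (n : ℕ) (hn : 3 ≤ n) : (T n).eval 1 = (n : ℤ) * 2 ^ (n - 3) := by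
  rw [T]
  simp only [eval_add, eval_mul, eval_pow, eval_ofNat, eval_finset_sum, eval_mul, eval_pow,
    eval_X, one_pow, mul_one, S_eval]
  have hterm : ∀ i ∈ Finset.Icc 1 ((n - 1) / 2),
      (2 : ℤ) ^ (n - i - 2) * 2 ^ (i - 1) = 2 ^ (n - 3) := by
    intro i hi
    simp only [Finset.mem_Icc] at hi
    rw [← pow_add]
    congr 1
    omega
  rw [Finset.sum_congr rfl hterm, Finset.sum_const, Nat.card_Icc, nsmul_eq_mul]
  obtain ⟨k, hk⟩ : ∃ k, n = 2 * k + 3 ∨ n = 2 * k + 4 := ⟨(n - 3) / 2, by omega⟩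
  rcases hk with rfl | rfl
  · rw [show (2 * k + 3 - 1) / 2 + 1 - 1 = k + 1 by omega,
      show 2 * k + 3 - 3 = 2 * k by omega, show (2 * k + 3 - 2) / 2 = k by omega]
    push_cast
    ring
  · rw [show (2 * k + 4 - 1) / 2 + 1 - 1 = k + 1 by omega,
      show 2 * k + 4 - 3 = 2 * k + 1 by omega, show (2 * k + 4 - 2) / 2 = k + 1 by omega]
    push_cast
    ring

theorem P_eval_one (n : ℕ) (hn : 3 ≤ n) :
    ∃ P : Polynomial ℤ, T n = D n * P ∧
      P.eval 1 = n * 2 ^ ((Nat.digits 2 (n - 2)).sum - 1) := by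
  have hdvd : D n ∣ T n := by
    rw [D_eq, T]
    apply dvd_add
    · apply Dvd.dvd.mul_left
      apply Finset.dvd_sum
      intro i hi
      simp only [Finset.mem_Icc] at hi
      exact (key (n - 2) (n - 2) (n - i - 2) (i - 1) (Or.inl (by omega))).mul_right _
    · rw [sq]
      exact key (n - 2) (n - 2) ((n - 2) / 2) ((n - 2) / 2) (Or.inr ⟨rfl, rfl⟩)
  obtain ⟨P, hP⟩ := hdvd
  refine ⟨P, hP, ?_⟩
  have h1 := congrArg (eval 1) hP
  rw [eval_mul, T_eval n hn, D_eval n hn] at h1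
  have hm : 1 ≤ n - 2 := by omega
  have hν1 := nu_pos (n - 2) hm
  have hν2 : (Nat.digits 2 (n - 2)).sum ≤ n - 2 := by
    have := nu_sum (n - 2) (n - 2) (Nat.lt_two_pow_self (n := n - 2))
    omega
  have h2 : (2 : ℤ) ^ ((n - 2) - (Nat.digits 2 (n - 2)).sum)
        * ((n : ℤ) * 2 ^ ((Nat.digits 2 (n - 2)).sum - 1))
      = 2 ^ ((n - 2) - (Nat.digits 2 (n - 2)).sum) * P.eval 1 := by
    rw [← h1]
    rw [show (2 : ℤ) ^ ((n - 2) - (Nat.digits 2 (n - 2)).sum)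
          * ((n : ℤ) * 2 ^ ((Nat.digits 2 (n - 2)).sum - 1))
        = (n : ℤ) * (2 ^ ((n - 2) - (Nat.digits 2 (n - 2)).sum)
          * 2 ^ ((Nat.digits 2 (n - 2)).sum - 1)) by ring, ← pow_add]
    congr 2
    omega
  exact (mul_left_cancel₀ (pow_ne_zero _ (by norm_num : (2 : ℤ) ≠ 0)) h2).symm
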